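/- Fix w ∈ Sₙ, let v ↦ v' be the greedy operation associated to w, and let v ∈ Sₙ satisfy v' = w. Then for every (a,b) ∈ Ref(w) one has v⁻¹(a) < v⁻¹(b), i.e. a appears before b in the one-line notation of v. Consequently C(v) ⊆ {x ∈ ℝⁿ : x_b ≥ x_a for all (a,b) ∈ Ref(w)}. -/

import Mathlib

namespace SchubertToric

open Equiv

/-- The number of inversions (= the length `ℓ`) of a permutation. -/
def invCount {n : ℕ} (w : Equiv.Perm (Fin n)) : ℕ :=
  ((Finset.univ : Finset (Fin n × Fin n)).filter fun p => p.1 < p.2 ∧ w p.2 < w p.1).card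

/-- `initSeg w d` is the set `{w(1), …, w(d)}` (0-indexed: images of the first `d` indices). -/
def initSeg {n : ℕ} (w : Equiv.Perm (Fin n)) (d : ℕ) : Finset (Fin n) :=
  (Finset.univ.filter fun i : Fin n => (i : ℕ) < d).image w

/-- `domLE S T`: the increasing rearrangement of `S` is componentwise ≤ that of `T`. -/
def domLE {n : ℕ} (S T : Finset (Fin n)) : Prop :=
  List.Forall₂ (· ≤ ·) (S.sort (· ≤ ·)) (T.sort (· ≤ ·))

/-- Bruhat order on `
Sₙ`, via the tableau criterion. -/
def bruhatLE {n : ℕ} (v w : Equiv.Perm (Fin n)) : Prop :=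
  ∀ d : ℕ, domLE (initSeg v d) (initSeg w d)

/-- `GreedyRel w v vp` says that `vp = v'`, the result of the greedy operation associated
to `w`: there is a sequence of indices `idx 0, idx 1, …`, each chosen as the *least* index
not previously chosen such that the increasing rearrangement of the previously chosen values
together with the new value is componentwise at most `{w(1),…,w(d)}`, and `vp d = v (idx d)`. -/
def GreedyRel {n : ℕ} (w v vp : Equiv.Perm (Fin n)) : Prop :=
  ∃ idx : Fin n → Fin n,
    (∀ d : Fin n, vp d = v (idx d)) ∧
    ∀ d : Fin n,
      IsLeast {i : Fin n |
        (∀ e : Fin n, e < d → idx e ≠ i) ∧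
        domLE (insert (v i)
            ((Finset.univ.filter fun e : Fin n => e < d).image fun e => v (idx e)))
          (initSeg w ((d : ℕ) + 1))}
        (idx d)

/-- Right weak order: `rightWeakLE u v` iff `v = u·s_{i₁}⋯s_{i_k}` with
`ℓ(u·s_{i₁}⋯s_{i_j}) = ℓ(u) + j` for all `0 ≤ j ≤ k`. -/
def rightWeakLE {n : ℕ} (u v : Equiv.Perm (Fin n)) : Prop :=
  ∃ L : List (Equiv.Perm (Fin n)),
    (∀ s ∈ L, ∃ (i : Fin n) (h : (i : ℕ) + 1 < n), s = Equiv.swap i ⟨(i : ℕ) + 1, h⟩) ∧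
    v = u * L.prod ∧
    ∀ k ≤ L.length, invCount (u * (L.take k).prod) = invCount u + k

/-- `Ref(w) = {(w(i),w(j)) : i < j, ℓ(w) − ℓ(t_{w(i),w(j)}·w) = 1}`. -/
def RefSet {n : ℕ} (w : Equiv.Perm (Fin n)) : Set (Fin n × Fin n) :=
  {p | ∃ i j : Fin n, i < j ∧ p = (w i, w j) ∧
    invCount (Equiv.swap (w i) (w j) * w) + 1 = invCount w}

/-- The (undirected) graph `Γ_w` on `Fin n` whose edges are the pairs in `Ref(w)`. -/
def refGraph {n : ℕ} (w : Equiv.Perm (Fin n)) : SimpleGraph (Fin n) :=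
  SimpleGraph.fromRel fun a b => (a, b) ∈ RefSet w

/-- The vertices of `Γ_w`: the integers occurring in pairs of `Ref(w)`. -/
def refVerts {n : ℕ} (w : Equiv.Perm (Fin n)) : Set (Fin n) :=
  {a | ∃ b, (a, b) ∈ RefSet w ∨ (b, a) ∈ RefSet w}

/-- The cone `C(v) = {x ∈ ℝⁿ : x_{v(1)} ≤ x_{v(2)} ≤ ⋯ ≤ x_{v(n)}}`. -/
def coneC {n : ℕ} (v : Equiv.Perm (Fin n)) : Set (Fin n → ℝ) :=
  {x | ∀ i j : Fin n, i ≤ j → x (v i) ≤ x (v j)}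

/-- `Ẽ_w(u) = {(u(i),u(j)) : i < j, t_{u(i),u(j)}·u ≤ w, |ℓ(u) − ℓ(t_{u(i),u(j)}·u)| = 1}`. -/
def Etil {n : ℕ} (w u : Equiv.Perm (Fin n)) : Set (Fin n × Fin n) :=
  {p | ∃ i j : Fin n, i < j ∧ p = (u i, u j) ∧
    bruhatLE (Equiv.swap (u i) (u j) * u) w ∧
    (invCount (Equiv.swap (u i) (u j) * u) + 1 = invCount u ∨
      invCount u + 1 = invCount (Equiv.swap (u i) (u j) * u))}

/-- An element `p = (a,b)` of `Ẽ_w(u)` is decomposable if it is a sum (under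
`(a,b)+(b,c) = (a,c)`) of two or more other elements of `Ẽ_w(u)`. -/
def Decomposable {n : ℕ} (w u : Equiv.Perm (Fin n)) (p : Fin n × Fin n) : Prop :=
  ∃ (m : ℕ) (c : ℕ → Fin n), 2 ≤ m ∧ c 0 = p.1 ∧ c m = p.2 ∧
    ∀ i < m, (c i, c (i + 1)) ∈ Etil w u ∧ (c i, c (i + 1)) ≠ p

/-- `E_w(u)`: the indecomposable elements of `Ẽ_w(u)`. -/
def Ew {n : ℕ} (w u : Equiv.Perm (Fin n)) : Set (Fin n × Fin n) :=
  {p | p ∈ Etil w u ∧ ¬ Decomposable w u p}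

/-- The longest element `w₀ = n(n−1)⋯21` of `Sₙ`. -/
def w0 {n : ℕ} : Equiv.Perm (Fin n) :=
  Function.Involutive.toPerm Fin.rev Fin.rev_rev


variable {α : Type*} [LinearOrder α]

lemma forall₂_le_refl (L : List α) : List.Forall₂ (· ≤ ·) L L :=
  List.forall₂_same.2 fun _ _ => le_refl _

lemma forall₂_cons_orderedInsert {a t : α} {L : List α} (hL : L.Pairwise (· ≤ ·))
    (ha : ∀ x ∈ L, a ≤ x) (hat : a ≤ t) :
    List.Forall₂ (· ≤ ·) (a :: L) (List.orderedInsert (· ≤ ·) t L) := by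
  induction L generalizing a with
  | nil => simpa using hat
  | cons b L ih =>
    rw [List.pairwise_cons] at hL
    by_cases h : t ≤ b
    · simp only [List.orderedInsert, if_pos h]
      exact List.Forall₂.cons hat (forall₂_le_refl _)
    · simp only [List.orderedInsert, if_neg h]
      exact List.Forall₂.cons (ha b (by simp)) (ih hL.2 hL.1 (le_of_not_ge h))

lemma forall₂_orderedInsert {s t : α} (hst : s ≤ t) {L : List α} (hL : L.Pairwise (· ≤ ·)) :
    List.Forall₂ (· ≤ ·) (List.orderedInsert (· ≤ ·) s L) (List.orderedInsert (· ≤ ·) t L) := by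
  induction L with
  | nil => simpa using hst
  | cons a L ih =>
    rw [List.pairwise_cons] at hL
    by_cases hs : s ≤ a
    · by_cases ht : t ≤ a
      · simp only [List.orderedInsert, if_pos hs, if_pos ht]
        exact List.Forall₂.cons hst (forall₂_le_refl _)
      · simp only [List.orderedInsert, if_pos hs, if_neg ht]
        exact List.Forall₂.cons hs (forall₂_cons_orderedInsert hL.2 hL.1 (le_of_not_ge ht))
    · have ht : ¬ t ≤ a := fun h => hs (hst.trans h)
      simp only [List.orderedInsert, if_neg hs, if_neg ht]
      exact List.Forall₂.cons le_rfl (ih hL.2)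

lemma sort_insert' {n : ℕ} {a : Fin n} {S : Finset (Fin n)} (ha : a ∉ S) :
    (insert a S).sort (· ≤ ·) = List.orderedInsert (· ≤ ·) a (S.sort (· ≤ ·)) := by
  have hperm : List.Perm ((insert a S).sort (· ≤ ·)) (a :: S.sort (· ≤ ·)) := by
    rw [← Multiset.coe_eq_coe]
    have h1 : ((insert a S).sort (· ≤ ·) : Multiset (Fin n)) = (insert a S).val := Finset.sort_eq _ _
    rw [h1, Finset.insert_val_of_notMem ha, ← Multiset.cons_coe, Finset.sort_eq]
  exact List.Perm.eq_of_pairwise' (r := (· ≤ ·))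
    (Finset.pairwise_sort _ _) ((Finset.pairwise_sort _ _).orderedInsert _ _)
    (hperm.trans (List.perm_orderedInsert _ _ _).symm)

lemma invCount_lt_swap {n : ℕ} (w : Equiv.Perm (Fin n)) {i j : Fin n}
    (hij : i < j) (hw : w i < w j) :
    invCount w < invCount (Equiv.swap (w i) (w j) * w) := by
  set u : Equiv.Perm (Fin n) := Equiv.swap (w i) (w j) * w with hu
  set σ : Equiv.Perm (Fin n) := Equiv.swap i j with hσ
  have hσi : σ i = j := by rw [hσ]; exact Equiv.swap_apply_left i j
  have hσj : σ j = i := by rw [hσ]; exact Equiv.swap_apply_right i j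
  have hσo : ∀ k : Fin n, k ≠ i → k ≠ j → σ k = k := fun k h1 h2 => by
    rw [hσ]; exact Equiv.swap_apply_of_ne_of_ne h1 h2
  have huw : ∀ k, u (σ k) = w k := by
    intro k
    have hwσ : u = w * σ := by
      rw [hu, hσ, Equiv.swap_apply_apply w i j]
      group
    rw [hwσ, Equiv.Perm.mul_apply, hσ, Equiv.swap_apply_self]
  have hui : u i = w j := by rw [← hσj]; exact huw j
  have huj : u j = w i := by rw [← hσi]; exact huw i
  have huk : ∀ k, k ≠ i → k ≠ j → u k = w k := fun k h1 h2 => by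
    have := huw k; rwa [hσo k h1 h2] at this
  set Iw := (Finset.univ : Finset (Fin n × Fin n)).filter fun p => p.1 < p.2 ∧ w p.2 < w p.1 with hIw
  set Iu := (Finset.univ : Finset (Fin n × Fin n)).filter fun p => p.1 < p.2 ∧ u p.2 < u p.1 with hIu
  have hijmem : (i, j) ∈ Iu := by
    simp only [hIu, Finset.mem_filter, Finset.mem_univ, true_and]
    exact ⟨hij, by rw [hui, huj]; exact hw⟩
  set F : Fin n × Fin n → Fin n × Fin n :=
    fun p => if (p.1 = i ∧ p.2 < j) ∨ (p.2 = j ∧ i < p.1) then p else (σ p.1, σ p.2) with hF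
  have hmaps : ∀ p ∈ Iw, F p ∈ Iu.erase (i, j) := by
    rintro ⟨p₁, p₂⟩ hp
    simp only [hIw, Finset.mem_filter, Finset.mem_univ, true_and] at hp
    obtain ⟨hplt, hpinv⟩ := hp
    rw [Finset.mem_erase]
    by_cases hfix : (p₁ = i ∧ p₂ < j) ∨ (p₂ = j ∧ i < p₁)
    · have hFp : F (p₁, p₂) = (p₁, p₂) := by simp [hF, hfix]
      rw [hFp]
      rcases hfix with ⟨h1, h2⟩ | ⟨h1, h2⟩
      · have hip2 : i < p₂ := by rw [← h1]; exact hplt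
        have hp2i : p₂ ≠ i := ne_of_gt hip2
        have hp2j : p₂ ≠ j := ne_of_lt h2
        refine ⟨fun hcon => hp2j (by rw [Prod.mk.injEq] at hcon; exact hcon.2), ?_⟩
        simp only [hIu, Finset.mem_filter, Finset.mem_univ, true_and]
        refine ⟨hplt, ?_⟩
        rw [h1, hui, huk p₂ hp2i hp2j]
        rw [h1] at hpinv
        exact lt_trans hpinv hw
      · have hp1i : p₁ ≠ i := ne_of_gt h2
        have hp1j : p₁ ≠ j := by rw [← h1]; exact ne_of_lt hplt
        refine ⟨fun hcon => hp1i (by rw [Prod.mk.injEq] at hcon; exact hcon.1), ?_⟩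
        simp only [hIu, Finset.mem_filter, Finset.mem_univ, true_and]
        refine ⟨hplt, ?_⟩
        rw [h1, huj, huk p₁ hp1i hp1j]
        rw [h1] at hpinv
        exact lt_trans hw hpinv
    · have hFp : F (p₁, p₂) = (σ p₁, σ p₂) := by simp [hF, hfix]
      rw [hFp]
      push_neg at hfix
      obtain ⟨hc1, hc2⟩ := hfix
      have hval : u (σ p₂) < u (σ p₁) := by rw [huw, huw]; exact hpinv
      have hord : σ p₁ < σ p₂ := by
        rcases eq_or_ne p₁ i with h1i | h1i
        · have hj2 : j ≤ p₂ := hc1 h1i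
          rcases eq_or_ne p₂ j with h2j | h2j
          · exfalso
            rw [h1i, h2j] at hpinv
            exact absurd hw (lt_asymm hpinv)
          · have hjp2 : j < p₂ := lt_of_le_of_ne hj2 (Ne.symm h2j)
            rw [h1i, hσi, hσo p₂ (ne_of_gt (lt_trans hij hjp2)) h2j]
            exact hjp2
        · rcases eq_or_ne p₁ j with h1j | h1j
          · have h2j : p₂ ≠ j := by rw [← h1j]; exact ne_of_gt hplt
            have h2i : p₂ ≠ i := ne_of_gt (lt_trans hij (h1j ▸ hplt))
            rw [h1j, hσj, hσo p₂ h2i h2j]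
            exact lt_trans hij (h1j ▸ hplt)
          · rcases eq_or_ne p₂ i with h2i | h2i
            · rw [h2i, hσi, hσo p₁ h1i h1j]
              exact lt_trans (h2i ▸ hplt) hij
            · rcases eq_or_ne p₂ j with h2j | h2j
              · have : p₁ < i := lt_of_le_of_ne (hc2 h2j) h1i
                rw [h2j, hσj, hσo p₁ h1i h1j]
                exact this
              · rw [hσo p₁ h1i h1j, hσo p₂ h2i h2j]
                exact hplt
      refine ⟨?_, by simp only [hIu, Finset.mem_filter, Finset.mem_univ, true_and]; exact ⟨hord, hval⟩⟩
      intro hcon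
      rw [Prod.mk.injEq] at hcon
      have e1 : p₁ = j := by
        have := congrArg σ hcon.1
        rwa [hσ, Equiv.swap_apply_self, ← hσ, hσi] at this
      have e2 : p₂ = i := by
        have := congrArg σ hcon.2
        rwa [hσ, Equiv.swap_apply_self, ← hσ, hσj] at this
      rw [e1, e2] at hplt
      exact absurd hij (lt_asymm hplt)
  have hrecover : ∀ p₁ p₂ q₁ q₂ : Fin n, (p₁, p₂) = (σ q₁, σ q₂) → q₁ = σ p₁ ∧ q₂ = σ p₂ := by
    intro p₁ p₂ q₁ q₂ hpq
    rw [Prod.mk.injEq] at hpq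
    constructor
    · have := congrArg σ hpq.1
      rw [hσ, Equiv.swap_apply_self, ← hσ] at this
      exact this.symm
    · have := congrArg σ hpq.2
      rw [hσ, Equiv.swap_apply_self, ← hσ] at this
      exact this.symm
  have hmixed : ∀ p₁ p₂ q₁ q₂ : Fin n,
      (p₁ < p₂ ∧ w p₂ < w p₁) → (q₁ < q₂ ∧ w q₂ < w q₁) →
      ((p₁ = i ∧ p₂ < j) ∨ (p₂ = j ∧ i < p₁)) →
      ¬ ((q₁ = i ∧ q₂ < j) ∨ (q₂ = j ∧ i < q₁)) →
      (p₁, p₂) ≠ (σ q₁, σ q₂) := by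
    rintro p₁ p₂ q₁ q₂ hp hq hfp _ hcon
    obtain ⟨eq1, eq2⟩ := hrecover _ _ _ _ hcon
    rcases hfp with ⟨h1, h2⟩ | ⟨h1, h2⟩
    · have hip2 : i < p₂ := by rw [← h1]; exact hp.1
      rw [h1, hσi] at eq1
      rw [hσo p₂ (ne_of_gt hip2) (ne_of_lt h2)] at eq2
      rw [eq1, eq2] at hq
      exact absurd (lt_trans hq.1 h2) (lt_irrefl j)
    · have hp1j : p₁ ≠ j := by rw [← h1]; exact ne_of_lt hp.1
      rw [hσo p₁ (ne_of_gt h2) hp1j] at eq1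
      rw [h1, hσj] at eq2
      rw [eq1, eq2] at hq
      exact absurd (lt_trans hq.1 h2) (lt_irrefl p₁)
  have hinj : Set.InjOn F Iw := by
    rintro ⟨p₁, p₂⟩ hp ⟨q₁, q₂⟩ hq hpq
    simp only [hIw, Finset.coe_filter, Set.mem_setOf_eq, Finset.mem_univ, true_and] at hp hq
    by_cases hfp : (p₁ = i ∧ p₂ < j) ∨ (p₂ = j ∧ i < p₁) <;>
      by_cases hfq : (q₁ = i ∧ q₂ < j) ∨ (q₂ = j ∧ i < q₁)
    · simpa [hF, hfp, hfq] using hpq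
    · exfalso
      have h1 : F (p₁, p₂) = (p₁, p₂) := by simp [hF, hfp]
      have h2 : F (q₁, q₂) = (σ q₁, σ q₂) := by simp [hF, hfq]
      exact hmixed p₁ p₂ q₁ q₂ hp hq hfp hfq (by rw [← h1, hpq, h2])
    · exfalso
      have h1 : F (p₁, p₂) = (σ p₁, σ p₂) := by simp [hF, hfp]
      have h2 : F (q₁, q₂) = (q₁, q₂) := by simp [hF, hfq]
      exact hmixed q₁ q₂ p₁ p₂ hq hp hfq hfp (by rw [← h2, ← hpq, h1])
    · have h1 : F (p₁, p₂) = (σ p₁, σ p₂) := by simp [hF, hfp]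
      have h2 : F (q₁, q₂) = (σ q₁, σ q₂) := by simp [hF, hfq]
      rw [h1, h2, Prod.mk.injEq] at hpq
      rw [Prod.mk.injEq]
      exact ⟨σ.injective hpq.1, σ.injective hpq.2⟩
  calc invCount w = Iw.card := rfl
    _ ≤ (Iu.erase (i, j)).card := Finset.card_le_card_of_injOn F hmaps hinj
    _ < Iu.card := Finset.card_erase_lt_of_mem hijmem
    _ = invCount u := rfl


lemma domLE_insert {n : ℕ} {s t : Fin n} {S : Finset (Fin n)} (hs : s ∉ S) (ht : t ∉ S)
    (hst : s ≤ t) : domLE (insert s S) (insert t S) := by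
  unfold domLE
  rw [sort_insert' hs, sort_insert' ht]
  exact forall₂_orderedInsert hst (Finset.pairwise_sort _ _)

/-- If `v' = w`, then for every `(a,b) ∈ Ref(w)` the value `a` appears before
`b` in the one-line notation of `v`; consequently `C(v) ⊆ {x : x_b ≥ x_a ∀ (a,b) ∈ Ref(w)}`. -/
theorem cone_subset_of_greedy_eq {n : ℕ} (w v : Equiv.Perm (Fin n))
    (h : GreedyRel w v w) :
    (∀ a b : Fin n, (a, b) ∈ RefSet w → v.symm a < v.symm b) ∧
    (∀ x ∈ coneC v, ∀ a b : Fin n, (a, b) ∈ RefSet w → x a ≤ x b) := by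
  obtain ⟨idx, hvp, hleast⟩ := h
  have hidx_inj : Function.Injective idx := fun d e hde =>
    w.injective (by rw [hvp d, hvp e, hde])
  have main : ∀ a b : Fin n, (a, b) ∈ RefSet w → v.symm a < v.symm b := by
    rintro a b ⟨i, j, hij, hab, hlen⟩
    rw [Prod.mk.injEq] at hab
    obtain ⟨ha, hb⟩ := hab
    have hwji : w j < w i := by
      rcases lt_trichotomy (w i) (w j) with h1 | h1 | h1
      · exfalso
        have := invCount_lt_swap w hij h1
        omega
      · exact absurd (w.injective h1) (ne_of_lt hij)
      · exact h1
    have hT : ((Finset.univ.filter fun e : Fin n => e < i).image fun e => v (idx e))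
        = initSeg w (i : ℕ) := by
      ext x
      simp only [initSeg, Finset.mem_image, Finset.mem_filter, Finset.mem_univ, true_and]
      constructor
      · rintro ⟨e, he, rfl⟩
        exact ⟨e, he, hvp e⟩
      · rintro ⟨e, he, rfl⟩
        exact ⟨e, he, (hvp e).symm⟩
    have hstep : initSeg w ((i : ℕ) + 1) = insert (w i) (initSeg w (i : ℕ)) := by
      rw [initSeg, initSeg, ← Finset.image_insert]
      congr 1
      ext k
      simp only [Finset.mem_filter, Finset.mem_univ, true_and, Finset.mem_insert]
      constructor
      · intro hk
        rcases Nat.lt_succ_iff_lt_or_eq.1 hk with h' | h'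
        · exact Or.inr h'
        · exact Or.inl (Fin.val_injective h')
      · rintro (rfl | h')
        · exact Nat.lt_succ_self _
        · exact Nat.lt_succ_of_lt h'
    have hwj_not : w j ∉ initSeg w (i : ℕ) := by
      simp only [initSeg, Finset.mem_image, Finset.mem_filter, Finset.mem_univ, true_and]
      rintro ⟨e, he, hwe⟩
      have he' : e = j := w.injective hwe
      rw [he'] at he
      exact absurd (lt_trans he hij) (lt_irrefl _)
    have hwi_not : w i ∉ initSeg w (i : ℕ) := by
      simp only [initSeg, Finset.mem_image, Finset.mem_filter, Finset.mem_univ, true_and]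
      rintro ⟨e, he, hwe⟩
      have he' : e = i := w.injective hwe
      rw [he'] at he
      exact lt_irrefl _ he
    have hmem : idx j ∈ {i' : Fin n |
        (∀ e : Fin n, e < i → idx e ≠ i') ∧
        domLE (insert (v i')
            ((Finset.univ.filter fun e : Fin n => e < i).image fun e => v (idx e)))
          (initSeg w ((i : ℕ) + 1))} := by
      constructor
      · intro e he hcon
        exact (ne_of_lt (lt_trans he hij)) (hidx_inj hcon)
      · rw [hT, ← hvp j, hstep]
        exact domLE_insert hwj_not hwi_not (le_of_lt hwji)
    have hle : idx i ≤ idx j := (hleast i).2 hmem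
    have hne : idx i ≠ idx j := fun hc => ne_of_lt hij (hidx_inj hc)
    have hsa : v.symm a = idx i := by rw [ha, hvp i, Equiv.symm_apply_apply]
    have hsb : v.symm b = idx j := by rw [hb, hvp j, Equiv.symm_apply_apply]
    rw [hsa, hsb]
    exact lt_of_le_of_ne hle hne
  refine ⟨main, fun x hx a b hab => ?_⟩
  have h1 := hx (v.symm a) (v.symm b) (le_of_lt (main a b hab))
  simpa using h1
end SchubertToric
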